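/- Let a, b ≥ 2 be integers with (a,b) ≠ (2,2). Let Ω be the set of partitions of the set {1,…,ab} into b blocks each of size a, and let n = |Ω|. The symmetric group Sym(ab) acts faithfully on Ω (a permutation σ sends a partition to the partition whose blocks are the σ-images of the original blocks). Then the base size of Sym(ab) in this action satisfies b(Sym(ab)) ≤ (1/2)·log₂ n + 6. -/

import Mathlib

open scoped Pointwise

/-- The base size of `G` acting on `Ω`: the smallest cardinality of a subset `B ⊆ Ω`
whose pointwise stabilizer in `G` is trivial. -/
noncomputable def baseSize (G Ω : Type*) [Group G] [MulAction G Ω] : ℕ :=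
  sInf {n | ∃ B : Finset Ω, B.card = n ∧ ∀ g : G, (∀ ω ∈ B, g • ω = ω) → g = 1}

/-- `P` is a partition of `Fin N` into blocks of size `a`: its members are pairwise disjoint
subsets of size `a` covering everything. -/
def IsUniformPartition {N : ℕ} (a : ℕ) (P : Finset (Finset (Fin N))) : Prop :=
  (∀ s ∈ P, s.card = a) ∧ ((P : Set (Finset (Fin N))).PairwiseDisjoint id) ∧
    ∀ x : Fin N, ∃ s ∈ P, x ∈ s

/-- The set of partitions of `{1,…,ab}` into `b` blocks of size `a`, with the action of
`Sym(ab)`: a permutation `σ` sends a partition to the partition whose blocks are the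
`σ`-images of the original blocks. -/
def uniformPartitions (a b : ℕ) :
    SubMulAction (Equiv.Perm (Fin (a * b))) (Finset (Finset (Fin (a * b)))) where
  carrier := {P | IsUniformPartition a P}
  smul_mem' := by
    intro σ P hP
    obtain ⟨h1, h2, h3⟩ := hP
    refine ⟨?_, ?_, ?_⟩
    · intro s hs
      rw [Finset.mem_smul_finset] at hs
      obtain ⟨t, ht, rfl⟩ := hs
      rw [Finset.card_smul_finset]
      exact h1 t ht
    · intro s hs t ht hst
      rw [Finset.mem_coe, Finset.mem_smul_finset] at hs ht
      obtain ⟨s₀, hs₀, rfl⟩ := hs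
      obtain ⟨t₀, ht₀, rfl⟩ := ht
      have h₀ : s₀ ≠ t₀ := fun h => hst (by rw [h])
      have hdisj : Disjoint s₀ t₀ :=
        h2 (Finset.mem_coe.mpr hs₀) (Finset.mem_coe.mpr ht₀) h₀
      simp only [Function.onFun, id]
      rw [Finset.smul_finset_def, Finset.smul_finset_def]
      exact (Finset.disjoint_image (MulAction.injective σ)).mpr hdisj
    · intro x
      obtain ⟨s, hs, hxs⟩ := h3 (σ⁻¹ • x)
      refine ⟨σ • s, Finset.smul_mem_smul_finset hs, ?_⟩
      simpa using Finset.smul_mem_smul_finset (a := σ) hxs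


open Finset

section Grid
variable {a b : ℕ}

/-- column `j` of the `a × b` grid -/
def gcol (a : ℕ) {b : ℕ} (j : Fin b) : Finset (Fin a × Fin b) := Finset.univ ×ˢ {j}

lemma mem_gcol {j : Fin b} {p : Fin a × Fin b} : p ∈ gcol a j ↔ p.2 = j := by
  rw [gcol, Finset.mem_product]; simp

lemma card_gcol (j : Fin b) : (gcol a j).card = a := by
  simp [gcol]

lemma gcol_inj [NeZero a] {j j' : Fin b} (h : gcol a j = gcol a j') : j = j' := by
  have := mem_gcol.mp (h ▸ mem_gcol.mpr (rfl : ((0 : Fin a), j).2 = j))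
  exact this

/-- the partition of the grid into columns -/
def Pcols (a b : ℕ) : Finset (Finset (Fin a × Fin b)) := Finset.image (gcol a) Finset.univ

lemma one_ne_zero_fin {b : ℕ} (hb : 2 ≤ b) [NeZero b] : (1 : Fin b) ≠ 0 := by
  have h1 : ((1 : Fin b) : ℕ) = 1 := by
    rw [Fin.val_one', Nat.mod_eq_of_lt (by omega : 1 < b)]
  intro h; rw [h] at h1; simp at h1

lemma add_one_ne_self {b : ℕ} (hb : 2 ≤ b) [NeZero b] (j : Fin b) : j + 1 ≠ j := by
  intro h
  have : (1 : Fin b) = 0 := by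
    have := congrArg (fun x => x - j) h
    simpa [add_comm, add_sub_cancel_right, sub_self] using this
  exact one_ne_zero_fin hb this

lemma Pcols_uniform [NeZero a] [NeZero b] :
    (∀ s ∈ Pcols a b, s.card = a) ∧
      ((Pcols a b : Set (Finset (Fin a × Fin b))).PairwiseDisjoint id) ∧
      ∀ x : Fin a × Fin b, ∃ s ∈ Pcols a b, x ∈ s := by
  refine ⟨?_, ?_, ?_⟩
  · intro s hs
    obtain ⟨j, -, rfl⟩ := Finset.mem_image.mp hs
    exact card_gcol j
  · intro s hs t ht hst
    obtain ⟨j, -, rfl⟩ := Finset.mem_image.mp hs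
    obtain ⟨j', -, rfl⟩ := Finset.mem_image.mp ht
    have hjj : j ≠ j' := fun h => hst (by rw [h])
    simp only [Function.onFun, id]
    rw [Finset.disjoint_left]
    intro p hp hp'
    exact hjj (mem_gcol.mp hp ▸ mem_gcol.mp hp')
  · intro x
    exact ⟨gcol a x.2, Finset.mem_image_of_mem _ (Finset.mem_univ _), mem_gcol.mpr rfl⟩


def Qb [NeZero b] (S : Finset (Fin a)) (j : Fin b) : Finset (Fin a × Fin b) :=
  Sᶜ ×ˢ {j} ∪ S ×ˢ {j + 1}

lemma mem_Qb [NeZero b] {S : Finset (Fin a)} {j : Fin b} {p : Fin a × Fin b} :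
    p ∈ Qb S j ↔ (p.1 ∉ S ∧ p.2 = j) ∨ (p.1 ∈ S ∧ p.2 = j + 1) := by
  rw [Qb, Finset.mem_union, Finset.mem_product, Finset.mem_product]
  simp

def Qpart [NeZero b] (S : Finset (Fin a)) : Finset (Finset (Fin a × Fin b)) :=
  Finset.image (Qb S) Finset.univ

lemma card_Qb [NeZero b] (hb : 2 ≤ b) (S : Finset (Fin a)) (j : Fin b) :
    (Qb S j).card = a := by
  have hne : j + 1 ≠ j := add_one_ne_self hb j
  rw [Qb, Finset.card_union_of_disjoint]
  · rw [Finset.card_product, Finset.card_product]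
    simp [Finset.card_compl]
    have := Finset.card_le_univ S
    simp at this
    omega
  · rw [Finset.disjoint_left]
    intro p hp hp'
    rw [Finset.mem_product] at hp hp'
    have e1 : p.2 = j := Finset.mem_singleton.mp hp.2
    have e2 : p.2 = j + 1 := Finset.mem_singleton.mp hp'.2
    exact hne (by rw [← e2, e1])
    
lemma Qpart_uniform [NeZero b] (hb : 2 ≤ b) (S : Finset (Fin a)) :
    (∀ s ∈ Qpart S (b := b), s.card = a) ∧
      ((Qpart S (b := b) : Set (Finset (Fin a × Fin b))).PairwiseDisjoint id) ∧
      ∀ x : Fin a × Fin b, ∃ s ∈ Qpart S (b := b), x ∈ s := by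
  refine ⟨?_, ?_, ?_⟩
  · intro s hs
    obtain ⟨j, -, rfl⟩ := Finset.mem_image.mp hs
    exact card_Qb hb S j
  · intro s hs t ht hst
    obtain ⟨j, -, rfl⟩ := Finset.mem_image.mp hs
    obtain ⟨j', -, rfl⟩ := Finset.mem_image.mp ht
    have hjj : j ≠ j' := fun h => hst (by rw [h])
    simp only [Function.onFun, id]
    rw [Finset.disjoint_left]
    intro p hp hp'
    rw [mem_Qb] at hp hp'
    rcases hp with ⟨h1, h2⟩ | ⟨h1, h2⟩ <;> rcases hp' with ⟨h1', h2'⟩ | ⟨h1', h2'⟩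
    · exact hjj (h2 ▸ h2')
    · exact h1 h1'
    · exact h1' h1
    · exact hjj (add_right_cancel (h2 ▸ h2' : j + 1 = j' + 1))
  · intro x
    by_cases hx : x.1 ∈ S
    · refine ⟨Qb S (x.2 - 1), Finset.mem_image_of_mem _ (Finset.mem_univ _), ?_⟩
      rw [mem_Qb]
      exact Or.inr ⟨hx, by abel⟩
    · exact ⟨Qb S x.2, Finset.mem_image_of_mem _ (Finset.mem_univ _),
        mem_Qb.mpr (Or.inl ⟨hx, rfl⟩)⟩


section Grid2
variable {a b : ℕ}

def Ablock0 (a b : ℕ) [NeZero a] [NeZero b] : Finset (Fin a × Fin b) :=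
  ((Finset.univ.erase 0) ×ˢ {(0 : Fin b)}) ∪ {((1 : Fin a), (1 : Fin b))}

def Ablock1 (a b : ℕ) [NeZero a] [NeZero b] : Finset (Fin a × Fin b) :=
  ((Finset.univ.erase 1) ×ˢ {(1 : Fin b)}) ∪ {((0 : Fin a), (0 : Fin b))}

def Rpart (a b : ℕ) [NeZero a] [NeZero b] : Finset (Finset (Fin a × Fin b)) :=
  insert (Ablock0 a b) (insert (Ablock1 a b)
    ((Finset.univ.filter (fun j : Fin b => j ≠ 0 ∧ j ≠ 1)).image (gcol a)))

variable [NeZero a] [NeZero b]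

lemma mem_Ablock0 {p : Fin a × Fin b} :
    p ∈ Ablock0 a b ↔ (p.1 ≠ 0 ∧ p.2 = 0) ∨ p = (1, 1) := by
  rw [Ablock0, Finset.mem_union, Finset.mem_product]
  simp

lemma mem_Ablock1 {p : Fin a × Fin b} :
    p ∈ Ablock1 a b ↔ (p.1 ≠ 1 ∧ p.2 = 1) ∨ p = (0, 0) := by
  rw [Ablock1, Finset.mem_union, Finset.mem_product]
  simp

lemma mem_Rpart {s : Finset (Fin a × Fin b)} :
    s ∈ Rpart a b ↔ s = Ablock0 a b ∨ s = Ablock1 a b ∨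
      ∃ j : Fin b, (j ≠ 0 ∧ j ≠ 1) ∧ s = gcol a j := by
  rw [Rpart]
  simp only [Finset.mem_insert, Finset.mem_image, Finset.mem_filter, Finset.mem_univ, true_and]
  constructor
  · rintro (h | h | ⟨j, hj, rfl⟩)
    · exact Or.inl h
    · exact Or.inr (Or.inl h)
    · exact Or.inr (Or.inr ⟨j, hj, rfl⟩)
  · rintro (h | h | ⟨j, hj, rfl⟩)
    · exact Or.inl h
    · exact Or.inr (Or.inl h)
    · exact Or.inr (Or.inr ⟨j, hj, rfl⟩)

lemma Rpart_uniform (ha : 2 ≤ a) (hb : 2 ≤ b) :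
    (∀ s ∈ Rpart a b, s.card = a) ∧
      ((Rpart a b : Set (Finset (Fin a × Fin b))).PairwiseDisjoint id) ∧
      ∀ x : Fin a × Fin b, ∃ s ∈ Rpart a b, x ∈ s := by
  have h10b : (1 : Fin b) ≠ 0 := one_ne_zero_fin hb
  have h10a : (1 : Fin a) ≠ 0 := one_ne_zero_fin ha
  have cardA0 : (Ablock0 a b).card = a := by
    rw [Ablock0, Finset.card_union_of_disjoint]
    · rw [Finset.card_product, Finset.card_singleton, Finset.card_singleton,
        Finset.card_erase_of_mem (Finset.mem_univ _)]
      simp only [Finset.card_univ, Fintype.card_fin, mul_one]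
      omega
    · rw [Finset.disjoint_singleton_right, Finset.mem_product]
      rintro ⟨-, h⟩
      exact h10b (Finset.mem_singleton.mp h)
  have cardA1 : (Ablock1 a b).card = a := by
    rw [Ablock1, Finset.card_union_of_disjoint]
    · rw [Finset.card_product, Finset.card_singleton, Finset.card_singleton,
        Finset.card_erase_of_mem (Finset.mem_univ _)]
      simp only [Finset.card_univ, Fintype.card_fin, mul_one]
      omega
    · rw [Finset.disjoint_singleton_right, Finset.mem_product]
      rintro ⟨-, h⟩
      exact h10b (((Finset.mem_singleton.mp h) : ((0 : Fin a), (0:Fin b)).2 = 1).symm)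
  have dA0A1 : Disjoint (Ablock0 a b) (Ablock1 a b) := by
    rw [Finset.disjoint_left]
    intro p hp hp'
    rcases mem_Ablock0.mp hp with ⟨h1, h2⟩ | h <;> rcases mem_Ablock1.mp hp' with ⟨h1', h2'⟩ | h'
    · exact h10b (by rw [← h2', h2])
    · exact h1 (by rw [h'])
    · exact h1' (by rw [h])
    · rw [h] at h'
      exact h10a (congrArg Prod.fst h')
  have dA0col : ∀ j : Fin b, j ≠ 0 → j ≠ 1 → Disjoint (Ablock0 a b) (gcol a j) := by
    intro j hj0 hj1
    rw [Finset.disjoint_left]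
    intro p hp hp'
    have hpj := mem_gcol.mp hp'
    rcases mem_Ablock0.mp hp with ⟨-, h2⟩ | h
    · exact hj0 (by rw [← hpj, h2])
    · exact hj1 (by rw [← hpj, h])
  have dA1col : ∀ j : Fin b, j ≠ 0 → j ≠ 1 → Disjoint (Ablock1 a b) (gcol a j) := by
    intro j hj0 hj1
    rw [Finset.disjoint_left]
    intro p hp hp'
    have hpj := mem_gcol.mp hp'
    rcases mem_Ablock1.mp hp with ⟨-, h2⟩ | h
    · exact hj1 (by rw [← hpj, h2])
    · exact hj0 (by rw [← hpj, h])
  refine ⟨?_, ?_, ?_⟩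
  · intro s hs
    rcases mem_Rpart.mp hs with rfl | rfl | ⟨j, -, rfl⟩
    · exact cardA0
    · exact cardA1
    · exact card_gcol j
  · intro s hs t ht hst
    simp only [Function.onFun, id]
    rcases mem_Rpart.mp (Finset.mem_coe.mp hs) with rfl | rfl | ⟨j, ⟨hj0, hj1⟩, rfl⟩ <;>
      rcases mem_Rpart.mp (Finset.mem_coe.mp ht) with rfl | rfl | ⟨j', ⟨hj0', hj1'⟩, rfl⟩
    · exact absurd rfl hst
    · exact dA0A1
    · exact dA0col j' hj0' hj1'
    · exact dA0A1.symm
    · exact absurd rfl hst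
    · exact dA1col j' hj0' hj1'
    · exact (dA0col j hj0 hj1).symm
    · exact (dA1col j hj0 hj1).symm
    · have hjj : j ≠ j' := fun h => hst (by rw [h])
      rw [Finset.disjoint_left]
      intro p hp hp'
      exact hjj (mem_gcol.mp hp ▸ mem_gcol.mp hp')
  · intro x
    by_cases hx0 : x.2 = 0
    · by_cases hx1 : x.1 = 0
      · refine ⟨Ablock1 a b, mem_Rpart.mpr (Or.inr (Or.inl rfl)), ?_⟩
        rw [mem_Ablock1]
        exact Or.inr (Prod.ext hx1 hx0)
      · exact ⟨Ablock0 a b, mem_Rpart.mpr (Or.inl rfl),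
          mem_Ablock0.mpr (Or.inl ⟨hx1, hx0⟩)⟩
    · by_cases hx0' : x.2 = 1
      · by_cases hx1 : x.1 = 1
        · refine ⟨Ablock0 a b, mem_Rpart.mpr (Or.inl rfl), ?_⟩
          rw [mem_Ablock0]
          exact Or.inr (Prod.ext hx1 hx0')
        · exact ⟨Ablock1 a b, mem_Rpart.mpr (Or.inr (Or.inl rfl)),
            mem_Ablock1.mpr (Or.inl ⟨hx1, hx0'⟩)⟩
      · exact ⟨gcol a x.2, mem_Rpart.mpr (Or.inr (Or.inr ⟨x.2, ⟨hx0, hx0'⟩, rfl⟩)),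
          mem_gcol.mpr rfl⟩

end Grid2


section Sigma
variable {a b : ℕ} [NeZero a] [NeZero b] (σ : Equiv.Perm (Fin a × Fin b))

/-- the induced permutation on columns -/
def pimap (j : Fin b) : Fin b := (σ (0, j)).2

variable {σ}

lemma image_gcol (hP0 : (Pcols a b).image (fun s => s.image σ) = Pcols a b) (j : Fin b) :
    (gcol a j).image σ = gcol a (pimap σ j) := by
  have h1 : (gcol a j).image σ ∈ Pcols a b := by
    rw [← hP0]
    exact Finset.mem_image_of_mem _ (Finset.mem_image_of_mem _ (Finset.mem_univ j))
  rw [Pcols] at h1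
  obtain ⟨j', -, hj'⟩ := Finset.mem_image.mp h1
  have h2 : σ (0, j) ∈ (gcol a j).image σ :=
    Finset.mem_image_of_mem _ (mem_gcol.mpr rfl)
  rw [← hj'] at h2 ⊢
  rw [show pimap σ j = j' from mem_gcol.mp h2]

lemma snd_apply (hP0 : (Pcols a b).image (fun s => s.image σ) = Pcols a b) (i : Fin a)
    (j : Fin b) : (σ (i, j)).2 = pimap σ j :=
  mem_gcol.mp (by
    rw [← image_gcol hP0]
    exact Finset.mem_image_of_mem _ (mem_gcol.mpr rfl))

lemma pimap_inj (hP0 : (Pcols a b).image (fun s => s.image σ) = Pcols a b) :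
    Function.Injective (pimap σ) := by
  intro j j' h
  have h1 : (gcol a j).image σ = (gcol a j').image σ := by
    rw [image_gcol hP0, image_gcol hP0, h]
  exact gcol_inj (Finset.image_injective σ.injective h1)

/-- Key step for the `Qpart` partitions: the column permutation is compatible with `+1`,
and each block maps onto the corresponding block. -/
lemma Q_step (hP0 : (Pcols a b).image (fun s => s.image σ) = Pcols a b)
    (hb : 2 ≤ b) {S : Finset (Fin a)}
    (hQ : (Qpart S (b := b)).image (fun s => s.image σ) = Qpart S (b := b))
    (hs0 : S.Nonempty) (hs1 : Sᶜ.Nonempty) (hs2 : 2 * S.card ≠ a) (j : Fin b) :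
    pimap σ (j + 1) = pimap σ j + 1 ∧ (Qb S j).image σ = Qb S (pimap σ j) := by
  have hE : (Qb S j).image σ ∈ Qpart S (b := b) := by
    rw [← hQ]
    exact Finset.mem_image_of_mem _ (Finset.mem_image_of_mem _ (Finset.mem_univ j))
  rw [Qpart] at hE
  obtain ⟨j', -, hj'⟩ := Finset.mem_image.mp hE
  obtain ⟨x0, hx0⟩ := hs1
  obtain ⟨x1, hx1⟩ := hs0
  rw [Finset.mem_compl] at hx0
  -- σ (x0, j) lies in Qb S j', with second coordinate pimap σ j
  have m0 : σ (x0, j) ∈ Qb S j' := by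
    rw [hj']
    exact Finset.mem_image_of_mem _ (mem_Qb.mpr (Or.inl ⟨hx0, rfl⟩))
  have m1 : σ (x1, j + 1) ∈ Qb S j' := by
    rw [hj']
    exact Finset.mem_image_of_mem _ (mem_Qb.mpr (Or.inr ⟨hx1, rfl⟩))
  have c0 : pimap σ j = j' ∨ pimap σ j = j' + 1 := by
    rcases mem_Qb.mp m0 with ⟨-, h⟩ | ⟨-, h⟩
    · exact Or.inl (by rw [← h, snd_apply hP0])
    · exact Or.inr (by rw [← h, snd_apply hP0])
  have c1 : pimap σ (j + 1) = j' ∨ pimap σ (j + 1) = j' + 1 := by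
    rcases mem_Qb.mp m1 with ⟨-, h⟩ | ⟨-, h⟩
    · exact Or.inl (by rw [← h, snd_apply hP0])
    · exact Or.inr (by rw [← h, snd_apply hP0])
  have hne : pimap σ j ≠ pimap σ (j + 1) :=
    fun h => add_one_ne_self hb j (pimap_inj hP0 h.symm)
  rcases c0 with hc0 | hc0
  · -- good case
    rcases c1 with hc1 | hc1
    · exact absurd (hc0.trans hc1.symm) hne
    · rw [← hc0] at hc1 hj'
      exact ⟨hc1, hj'.symm⟩
  · -- bad case: derive a contradiction via cardinalities
    have hc1 : pimap σ (j + 1) = j' := by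
      rcases c1 with h | h
      · exact h
      · exact absurd (hc0.trans h.symm) hne
    exfalso
    -- the filter of E at column j' is exactly the image of S ×ˢ {j+1},
    -- but also equals Sᶜ ×ˢ {j'}
    have himg : (Qb S j).image σ = (Sᶜ ×ˢ {j}).image σ ∪ (S ×ˢ {j + 1}).image σ := by
      rw [Qb, Finset.image_union]
    have hfilt : ((Qb S j).image σ).filter (fun p => p.2 = j') =
        (S ×ˢ {j + 1}).image σ := by
      rw [himg, Finset.filter_union]
      have e1 : ((Sᶜ ×ˢ {j}).image σ).filter (fun p => p.2 = j') = ∅ := by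
        rw [Finset.filter_eq_empty_iff]
        rintro p hp
        obtain ⟨q, hq, rfl⟩ := Finset.mem_image.mp hp
        rw [Finset.mem_product, Finset.mem_singleton] at hq
        have : (σ q).2 = pimap σ j := by
          rw [← hq.2] at *
          exact snd_apply hP0 q.1 q.2
        rw [this, hc0]
        exact add_one_ne_self hb j'
      have e2 : ((S ×ˢ {j + 1}).image σ).filter (fun p => p.2 = j') =
          (S ×ˢ {j + 1}).image σ := by
        rw [Finset.filter_eq_self]
        intro p hp
        obtain ⟨q, hq, rfl⟩ := Finset.mem_image.mp hp
        rw [Finset.mem_product, Finset.mem_singleton] at hq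
        have : (σ q).2 = pimap σ (j + 1) := by
          rw [← hq.2] at *
          exact snd_apply hP0 q.1 q.2
        rw [this, hc1]
      rw [e1, e2, Finset.empty_union]
    have hfilt2 : ((Qb S j).image σ).filter (fun p => p.2 = j') = Sᶜ ×ˢ {j'} := by
      rw [← hj', Qb, Finset.filter_union]
      have e1 : (Sᶜ ×ˢ ({j'} : Finset (Fin b))).filter (fun p => p.2 = j') =
          Sᶜ ×ˢ {j'} := by
        rw [Finset.filter_eq_self]
        intro p hp
        rw [Finset.mem_product, Finset.mem_singleton] at hp
        exact hp.2
      have e2 : (S ×ˢ ({j' + 1} : Finset (Fin b))).filter (fun p => p.2 = j') = ∅ := by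
        rw [Finset.filter_eq_empty_iff]
        intro p hp
        rw [Finset.mem_product, Finset.mem_singleton] at hp
        rw [hp.2]
        exact add_one_ne_self hb j'
      rw [e1, e2, Finset.union_empty]
    have hcard := congrArg Finset.card (hfilt.symm.trans hfilt2)
    rw [Finset.card_image_of_injective _ σ.injective, Finset.card_product,
      Finset.card_product, Finset.card_compl, Finset.card_singleton,
      Finset.card_singleton] at hcard
    have hle : S.card ≤ a := by
      have := Finset.card_le_univ S
      simpa using this
    simp only [Fintype.card_fin, mul_one] at hcard
    omega
end Sigma


section Sigma2
variable {a b : ℕ} [NeZero a] [NeZero b] {σ : Equiv.Perm (Fin a × Fin b)}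

lemma Q_rows (hP0 : (Pcols a b).image (fun s => s.image σ) = Pcols a b)
    (hb : 2 ≤ b) {S : Finset (Fin a)}
    (hQ : (Qpart S (b := b)).image (fun s => s.image σ) = Qpart S (b := b))
    (hs0 : S.Nonempty) (hs1 : Sᶜ.Nonempty) (hs2 : 2 * S.card ≠ a) (i : Fin a)
    (j : Fin b) : i ∈ S ↔ (σ (i, j)).1 ∈ S := by
  constructor
  · intro hi
    have h1 : (i, j) ∈ Qb S (j - 1) := by
      rw [mem_Qb]
      exact Or.inr ⟨hi, by abel⟩
    have h2 : σ (i, j) ∈ Qb S (pimap σ (j - 1)) := by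
      rw [← (Q_step hP0 hb hQ hs0 hs1 hs2 (j - 1)).2]
      exact Finset.mem_image_of_mem _ h1
    have h3 : pimap σ j = pimap σ (j - 1) + 1 := by
      have := (Q_step hP0 hb hQ hs0 hs1 hs2 (j - 1)).1
      rw [show j - 1 + 1 = j by abel] at this
      exact this
    rcases mem_Qb.mp h2 with ⟨-, h⟩ | ⟨h, -⟩
    · exfalso
      rw [snd_apply hP0, h3] at h
      exact add_one_ne_self hb _ h
    · exact h
  · intro hi
    by_contra hiS
    have h1 : (i, j) ∈ Qb S j := mem_Qb.mpr (Or.inl ⟨hiS, rfl⟩)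
    have h2 : σ (i, j) ∈ Qb S (pimap σ j) := by
      rw [← (Q_step hP0 hb hQ hs0 hs1 hs2 j).2]
      exact Finset.mem_image_of_mem _ h1
    rcases mem_Qb.mp h2 with ⟨h, -⟩ | ⟨-, h⟩
    · exact h hi
    · rw [snd_apply hP0] at h
      exact add_one_ne_self hb _ h.symm

/-- induction principle around the cyclic group `Fin b` -/
lemma finb_induction {P : Fin b → Prop} (h0 : P 0) (hstep : ∀ j, P j → P (j + 1)) :
    ∀ j, P j := by
  have hb1 : 0 < b := Fin.pos_iff_nonempty.mpr ⟨0⟩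
  have key : ∀ k : ℕ, ∀ hk : k < b, P ⟨k, hk⟩ := by
    intro k
    induction k with
    | zero => intro hk; exact h0
    | succ n ih =>
      intro hk
      have hn : n < b := Nat.lt_of_succ_lt hk
      have : (⟨n, hn⟩ : Fin b) + 1 = ⟨n + 1, hk⟩ := by
        apply Fin.ext
        rw [Fin.add_def]
        simp only [Fin.val_one']
        have h1b : 1 % b = 1 := Nat.mod_eq_of_lt (by omega)
        rw [h1b]
        exact Nat.mod_eq_of_lt hk
      rw [← this]
      exact hstep _ (ih hn)
  intro j
  have := key j.1 j.2
  simpa using this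

lemma shift_of_step {f : Fin b → Fin b} (hf : ∀ j, f (j + 1) = f j + 1) :
    ∀ j, f j = j + f 0 := by
  apply finb_induction
  · rw [zero_add]
  · intro j hj
    rw [hf j, hj, add_assoc, add_comm (f 0) 1, ← add_assoc]

lemma refl_of_step {f : Fin b → Fin b} (hf : ∀ j, f (j + 1) = f j - 1) :
    ∀ j, f j = f 0 - j := by
  apply finb_induction
  · rw [sub_zero]
  · intro j hj
    rw [hf j, hj]
    abel

end Sigma2


section Sigma3
variable {a b : ℕ} [NeZero a] [NeZero b] {σ : Equiv.Perm (Fin a × Fin b)}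

lemma image_shift_prod {c : Fin b} (hσ : ∀ p : Fin a × Fin b, σ p = (p.1, p.2 + c))
    (T : Finset (Fin a)) (x : Fin b) :
    (T ×ˢ ({x} : Finset (Fin b))).image σ = T ×ˢ {x + c} := by
  ext p
  rw [Finset.mem_image]
  constructor
  · rintro ⟨q, hq, rfl⟩
    rw [Finset.mem_product, Finset.mem_singleton] at hq
    rw [hσ, Finset.mem_product, Finset.mem_singleton]
    exact ⟨hq.1, by rw [hq.2]⟩
  · intro hp
    rw [Finset.mem_product, Finset.mem_singleton] at hp
    refine ⟨(p.1, x), ?_, ?_⟩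
    · rw [Finset.mem_product, Finset.mem_singleton]
      exact ⟨hp.1, rfl⟩
    · rw [hσ]
      exact Prod.ext rfl hp.2.symm

lemma R_step (ha : 3 ≤ a) (hb : 2 ≤ b) {c : Fin b}
    (hσ : ∀ p : Fin a × Fin b, σ p = (p.1, p.2 + c))
    (hR : (Rpart a b).image (fun s => s.image σ) = Rpart a b) : c = 0 := by
  have h2a : ((2 : Fin a) : ℕ) = 2 := by
    open Fin.NatCast in have : (2 : Fin a) = ((2 : ℕ) : Fin a) := by norm_cast
    rw [this, Fin.val_cast_of_lt (by omega)]
  have h1a : ((1 : Fin a) : ℕ) = 1 := by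
    rw [Fin.val_one', Nat.mod_eq_of_lt (by omega : 1 < a)]
  have hne21 : (2 : Fin a) ≠ 1 := by
    intro h; rw [Fin.ext_iff, h2a, h1a] at h; omega
  have hne20 : (2 : Fin a) ≠ 0 := by
    intro h; rw [Fin.ext_iff, h2a, Fin.val_zero] at h; omega
  have hne10 : (1 : Fin a) ≠ 0 := one_ne_zero_fin (by omega)
  have hE : (Ablock0 a b).image σ ∈ Rpart a b := by
    rw [← hR]
    exact Finset.mem_image_of_mem _ (mem_Rpart.mpr (Or.inl rfl))
  have hEeq : (Ablock0 a b).image σ =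
      ((Finset.univ.erase (0 : Fin a)) ×ˢ {c}) ∪ {((1 : Fin a), 1 + c)} := by
    rw [Ablock0, Finset.image_union, image_shift_prod hσ, Finset.image_singleton, hσ]
    rw [zero_add]
  have mem2c : ((2 : Fin a), c) ∈ (Ablock0 a b).image σ := by
    rw [hEeq, Finset.mem_union]
    left
    rw [Finset.mem_product, Finset.mem_singleton]
    exact ⟨Finset.mem_erase.mpr ⟨hne20, Finset.mem_univ _⟩, rfl⟩
  have mem11c : ((1 : Fin a), 1 + c) ∈ (Ablock0 a b).image σ := by
    rw [hEeq, Finset.mem_union]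
    right
    exact Finset.mem_singleton_self _
  rcases mem_Rpart.mp hE with hcase | hcase | ⟨j, ⟨hj0, hj1⟩, hcase⟩
  · -- image = Ablock0 : conclude c = 0
    rw [hcase] at mem2c
    rcases mem_Ablock0.mp mem2c with ⟨-, h⟩ | h
    · exact h
    · exact absurd (congrArg Prod.fst h) hne21
  · -- image = Ablock1 : contradiction
    exfalso
    rw [hcase] at mem11c
    rcases mem_Ablock1.mp mem11c with ⟨h, -⟩ | h
    · exact h rfl
    · exact hne10 (congrArg Prod.fst h)
  · -- image = a column : contradiction
    exfalso
    have h0 : ((0 : Fin a), j) ∈ (Ablock0 a b).image σ := by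
      rw [hcase]
      exact mem_gcol.mpr rfl
    rw [hEeq, Finset.mem_union] at h0
    rcases h0 with h | h
    · rw [Finset.mem_product] at h
      exact (Finset.mem_erase.mp h.1).1 rfl
    · exact hne10 ((congrArg Prod.fst (Finset.mem_singleton.mp h)).symm)

/-- Main rigidity result, case `a ≥ 3`. -/
theorem caseB_rigid (ha : 3 ≤ a) (hb : 2 ≤ b) (T : ℕ → Finset (Fin a)) (m : ℕ)
    (hT0 : ∀ t ≤ m, (T t).Nonempty) (hT1 : ∀ t ≤ m, (T t)ᶜ.Nonempty)
    (hT2 : ∀ t ≤ m, 2 * (T t).card ≠ a)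
    (hsep : ∀ i i' : Fin a, i ≠ i' → ∃ t ≤ m, ¬(i ∈ T t ↔ i' ∈ T t))
    (hP0 : (Pcols a b).image (fun s => s.image σ) = Pcols a b)
    (hQ : ∀ t ≤ m, (Qpart (T t) (b := b)).image (fun s => s.image σ) = Qpart (T t) (b := b))
    (hR : (Rpart a b).image (fun s => s.image σ) = Rpart a b) : σ = 1 := by
  have hrows : ∀ p : Fin a × Fin b, (σ p).1 = p.1 := by
    rintro ⟨i, j⟩
    by_contra hne
    obtain ⟨t, htm, ht⟩ := hsep _ _ (Ne.symm hne)
    exact ht (Q_rows hP0 hb (hQ t htm) (hT0 t htm) (hT1 t htm) (hT2 t htm) i j)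
  have hshift : ∀ j : Fin b, pimap σ j = j + pimap σ 0 := by
    apply shift_of_step
    intro j
    exact (Q_step hP0 hb (hQ 0 (Nat.zero_le m)) (hT0 0 (Nat.zero_le m))
      (hT1 0 (Nat.zero_le m)) (hT2 0 (Nat.zero_le m)) j).1
  have hσ : ∀ p : Fin a × Fin b, σ p = (p.1, p.2 + pimap σ 0) := by
    rintro ⟨i, j⟩
    refine Prod.ext (hrows _) ?_
    rw [snd_apply hP0, hshift]
  have hc := R_step ha hb hσ hR
  apply Equiv.ext
  intro p
  rw [hσ, hc, add_zero]
  rfl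

end Sigma3


section CaseA
variable {b : ℕ} [NeZero b]

def Hb (i : Fin 2) (x y : Fin b) : Finset (Fin 2 × Fin b) := {(i, x), (i, y)}

def Mpart (x y : Fin b) : Finset (Finset (Fin 2 × Fin b)) :=
  insert (Hb 0 x y) (insert (Hb 1 x y)
    ((Finset.univ.filter (fun j : Fin b => j ≠ x ∧ j ≠ y)).image (gcol 2)))

lemma mem_Hb {i : Fin 2} {x y : Fin b} {p : Fin 2 × Fin b} :
    p ∈ Hb i x y ↔ p = (i, x) ∨ p = (i, y) := by
  rw [Hb, Finset.mem_insert, Finset.mem_singleton]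

lemma mem_Mpart {x y : Fin b} {s : Finset (Fin 2 × Fin b)} :
    s ∈ Mpart x y ↔ s = Hb 0 x y ∨ s = Hb 1 x y ∨
      ∃ j : Fin b, (j ≠ x ∧ j ≠ y) ∧ s = gcol 2 j := by
  rw [Mpart]
  simp only [Finset.mem_insert, Finset.mem_image, Finset.mem_filter, Finset.mem_univ, true_and]
  constructor
  · rintro (h | h | ⟨j, hj, rfl⟩)
    · exact Or.inl h
    · exact Or.inr (Or.inl h)
    · exact Or.inr (Or.inr ⟨j, hj, rfl⟩)
  · rintro (h | h | ⟨j, hj, rfl⟩)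
    · exact Or.inl h
    · exact Or.inr (Or.inl h)
    · exact Or.inr (Or.inr ⟨j, hj, rfl⟩)

lemma fin2_cases : ∀ x : Fin 2, x = 0 ∨ x = 1 := by decide

lemma Mpart_uniform {x y : Fin b} (hxy : x ≠ y) :
    (∀ s ∈ Mpart x y, s.card = 2) ∧
      ((Mpart x y : Set (Finset (Fin 2 × Fin b))).PairwiseDisjoint id) ∧
      ∀ p : Fin 2 × Fin b, ∃ s ∈ Mpart x y, p ∈ s := by
  have cardH : ∀ i : Fin 2, (Hb i x y).card = 2 := by
    intro i
    rw [Hb, Finset.card_insert_of_notMem, Finset.card_singleton]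
    rw [Finset.mem_singleton]
    intro h
    exact hxy (congrArg Prod.snd h)
  have dH : Disjoint (Hb (0 : Fin 2) x y) (Hb 1 x y) := by
    rw [Finset.disjoint_left]
    intro p hp hp'
    rcases mem_Hb.mp hp with rfl | rfl <;> rcases mem_Hb.mp hp' with h | h <;>
      simpa using congrArg Prod.fst h
  have dHcol : ∀ (i : Fin 2) (j : Fin b), j ≠ x → j ≠ y →
      Disjoint (Hb i x y) (gcol 2 j) := by
    intro i j hjx hjy
    rw [Finset.disjoint_left]
    intro p hp hp'
    have := mem_gcol.mp hp'
    rcases mem_Hb.mp hp with rfl | rfl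
    · exact hjx this.symm
    · exact hjy this.symm
  refine ⟨?_, ?_, ?_⟩
  · intro s hs
    rcases mem_Mpart.mp hs with rfl | rfl | ⟨j, -, rfl⟩
    · exact cardH 0
    · exact cardH 1
    · exact card_gcol j
  · intro s hs t ht hst
    simp only [Function.onFun, id]
    rcases mem_Mpart.mp (Finset.mem_coe.mp hs) with rfl | rfl | ⟨j, ⟨hj0, hj1⟩, rfl⟩ <;>
      rcases mem_Mpart.mp (Finset.mem_coe.mp ht) with rfl | rfl | ⟨j', ⟨hj0', hj1'⟩, rfl⟩
    · exact absurd rfl hst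
    · exact dH
    · exact dHcol 0 j' hj0' hj1'
    · exact dH.symm
    · exact absurd rfl hst
    · exact dHcol 1 j' hj0' hj1'
    · exact (dHcol 0 j hj0 hj1).symm
    · exact (dHcol 1 j hj0 hj1).symm
    · have hjj : j ≠ j' := fun h => hst (by rw [h])
      rw [Finset.disjoint_left]
      intro p hp hp'
      exact hjj (mem_gcol.mp hp ▸ mem_gcol.mp hp')
  · intro p
    by_cases hx : p.2 = x
    · refine ⟨Hb p.1 x y, ?_, mem_Hb.mpr (Or.inl (Prod.ext rfl hx))⟩
      rcases fin2_cases p.1 with h | h <;> rw [h]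
      · exact mem_Mpart.mpr (Or.inl rfl)
      · exact mem_Mpart.mpr (Or.inr (Or.inl rfl))
    · by_cases hy : p.2 = y
      · refine ⟨Hb p.1 x y, ?_, mem_Hb.mpr (Or.inr (Prod.ext rfl hy))⟩
        rcases fin2_cases p.1 with h | h <;> rw [h]
        · exact mem_Mpart.mpr (Or.inl rfl)
        · exact mem_Mpart.mpr (Or.inr (Or.inl rfl))
      · exact ⟨gcol 2 p.2, mem_Mpart.mpr (Or.inr (Or.inr ⟨p.2, ⟨hx, hy⟩, rfl⟩)),
          mem_gcol.mpr rfl⟩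

variable {σ : Equiv.Perm (Fin 2 × Fin b)}

lemma mem_Qb_two {j : Fin b} {p : Fin 2 × Fin b} :
    p ∈ Qb ({0} : Finset (Fin 2)) j ↔ p = (1, j) ∨ p = (0, j + 1) := by
  rw [mem_Qb]
  have h1 : ∀ x : Fin 2, x ∉ ({0} : Finset (Fin 2)) ↔ x = 1 := by decide
  have h2 : ∀ x : Fin 2, x ∈ ({0} : Finset (Fin 2)) ↔ x = 0 := by decide
  rw [h1, h2, Prod.ext_iff, Prod.ext_iff]

lemma flip_fst (hP0 : (Pcols 2 b).image (fun s => s.image σ) = Pcols 2 b) (j : Fin b) :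
    (σ (0, j)).1 ≠ (σ (1, j)).1 := by
  intro h
  have hne : ((0 : Fin 2), j) ≠ (1, j) := by
    intro hh
    simpa using congrArg Prod.fst hh
  apply hne
  apply σ.injective
  apply Prod.ext h
  rw [snd_apply hP0, snd_apply hP0]

lemma caseA_D (hb : 2 ≤ b)
    (hP0 : (Pcols 2 b).image (fun s => s.image σ) = Pcols 2 b)
    (hQ : (Qpart ({0} : Finset (Fin 2)) (b := b)).image (fun s => s.image σ) =
      Qpart ({0} : Finset (Fin 2)) (b := b)) (j : Fin b) :
    ((σ (1, j)).1 = 1 ∧ (σ (1, j + 1)).1 = 1 ∧ pimap σ (j + 1) = pimap σ j + 1) ∨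
      ((σ (1, j)).1 = 0 ∧ (σ (1, j + 1)).1 = 0 ∧ pimap σ (j + 1) = pimap σ j - 1) := by
  have hE : (Qb ({0} : Finset (Fin 2)) j).image σ ∈ Qpart ({0} : Finset (Fin 2)) (b := b) := by
    rw [← hQ]
    exact Finset.mem_image_of_mem _ (Finset.mem_image_of_mem _ (Finset.mem_univ j))
  rw [Qpart] at hE
  obtain ⟨j', -, hj'⟩ := Finset.mem_image.mp hE
  have hu : σ (1, j) ∈ Qb ({0} : Finset (Fin 2)) j' := by
    rw [hj']
    exact Finset.mem_image_of_mem _ (mem_Qb_two.mpr (Or.inl rfl))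
  have hv : σ (0, j + 1) ∈ Qb ({0} : Finset (Fin 2)) j' := by
    rw [hj']
    exact Finset.mem_image_of_mem _ (mem_Qb_two.mpr (Or.inr rfl))
  have huv : σ (1, j) ≠ σ (0, j + 1) := by
    intro h
    have := σ.injective h
    simpa using congrArg Prod.fst this
  have hsnd1 : (σ (1, j)).2 = pimap σ j := snd_apply hP0 _ _
  have hsnd2 : (σ (0, j + 1)).2 = pimap σ (j + 1) := snd_apply hP0 _ _
  rcases mem_Qb_two.mp hu with h | h
  · -- σ (1,j) = (1, j')
    left
    have he1 : (σ (1, j)).1 = 1 := congrArg Prod.fst h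
    have hp1 : pimap σ j = j' := by rw [← hsnd1, h]
    have hv2 : σ (0, j + 1) = (0, j' + 1) := by
      rcases mem_Qb_two.mp hv with h' | h'
      · exact absurd (h'.trans h.symm) (Ne.symm huv)
      · exact h'
    refine ⟨he1, ?_, ?_⟩
    · have h0 : (σ (0, j + 1)).1 = 0 := congrArg Prod.fst hv2
      have := flip_fst hP0 (j + 1)
      rw [h0] at this
      rcases fin2_cases (σ (1, j + 1)).1 with h'' | h''
      · exact absurd h''.symm this
      · exact h''
    · rw [← hsnd2, hv2, hp1]
  · -- σ (1,j) = (0, j' + 1)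
    right
    have he1 : (σ (1, j)).1 = 0 := congrArg Prod.fst h
    have hp1 : pimap σ j = j' + 1 := by rw [← hsnd1, h]
    have hv2 : σ (0, j + 1) = (1, j') := by
      rcases mem_Qb_two.mp hv with h' | h'
      · exact h'
      · exact absurd (h'.trans h.symm) (Ne.symm huv)
    refine ⟨he1, ?_, ?_⟩
    · have h0 : (σ (0, j + 1)).1 = 1 := congrArg Prod.fst hv2
      have := flip_fst hP0 (j + 1)
      rw [h0] at this
      rcases fin2_cases (σ (1, j + 1)).1 with h'' | h''
      · exact h''
      · exact absurd h''.symm this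
    · rw [← hsnd2, hv2, hp1]
      abel
end CaseA


section CaseA2
variable {b : ℕ} [NeZero b] {σ : Equiv.Perm (Fin 2 × Fin b)}

lemma image_shift_gcol {a : ℕ} [NeZero a] {σ : Equiv.Perm (Fin a × Fin b)} {c : Fin b}
    (hσ : ∀ p : Fin a × Fin b, σ p = (p.1, p.2 + c)) (j : Fin b) :
    (gcol a j).image σ = gcol a (j + c) := by
  rw [gcol, gcol, image_shift_prod hσ]

lemma shift_M2 (hb : 3 ≤ b) {c : Fin b}
    (hσ : ∀ p : Fin 2 × Fin b, σ p = (p.1, p.2 + c))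
    (hM : (Mpart (0 : Fin b) 1).image (fun s => s.image σ) = Mpart (0 : Fin b) 1) :
    c = 0 := by
  by_contra hc
  have h1b : ((1 : Fin b) : ℕ) = 1 := by
    rw [Fin.val_one', Nat.mod_eq_of_lt (by omega)]
  have hcv : 1 ≤ (c : ℕ) ∧ (c : ℕ) < b := by
    refine ⟨?_, c.isLt⟩
    by_contra h
    exact hc (Fin.ext (show (c : ℕ) = 0 by omega))
  -- find a pure column j₀ ∉ {0,1} with j₀ + c ∈ {0,1}
  obtain ⟨j₀, hj₀0, hj₀1, ht⟩ : ∃ j₀ : Fin b, j₀ ≠ 0 ∧ j₀ ≠ 1 ∧ (j₀ + c = 0 ∨ j₀ + c = 1) := by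
    have h0v : ((0 : Fin b) : ℕ) = 0 := rfl
    rcases le_or_gt (c : ℕ) (b - 2) with h | h
    · refine ⟨⟨b - (c : ℕ), by omega⟩, ?_, ?_, Or.inl ?_⟩
      · intro hh
        have hv := congrArg Fin.val hh
        rw [h0v] at hv
        have hv' : b - (c : ℕ) = 0 := hv
        omega
      · intro hh
        have hv := congrArg Fin.val hh
        rw [h1b] at hv
        have hv' : b - (c : ℕ) = 1 := hv
        omega
      · apply Fin.ext
        rw [Fin.add_def, h0v]
        show (b - (c : ℕ) + (c : ℕ)) % b = 0
        have hbc : b - (c : ℕ) + (c : ℕ) = b := by omega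
        rw [hbc, Nat.mod_self]
    · have hcb : (c : ℕ) = b - 1 := by omega
      refine ⟨⟨2, by omega⟩, ?_, ?_, Or.inr ?_⟩
      · intro hh
        have hv := congrArg Fin.val hh
        rw [h0v] at hv
        have hv' : 2 = 0 := hv
        omega
      · intro hh
        have hv := congrArg Fin.val hh
        rw [h1b] at hv
        have hv' : 2 = 1 := hv
        omega
      · apply Fin.ext
        rw [Fin.add_def, h1b, hcb]
        show (2 + (b - 1)) % b = 1
        have hbc : 2 + (b - 1) = b + 1 := by omega
        rw [hbc, Nat.add_mod_left b 1, Nat.mod_eq_of_lt (by omega)]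
  have hE : (gcol 2 j₀).image σ ∈ Mpart (0 : Fin b) 1 := by
    rw [← hM]
    exact Finset.mem_image_of_mem _
      (mem_Mpart.mpr (Or.inr (Or.inr ⟨j₀, ⟨hj₀0, hj₀1⟩, rfl⟩)))
  rw [image_shift_gcol hσ] at hE
  have key : ∀ t : Fin b, (t = 0 ∨ t = 1) → gcol 2 t ∉ Mpart (0 : Fin b) 1 := by
    intro t htt hmem
    rcases mem_Mpart.mp hmem with h | h | ⟨j'', ⟨hj''0, hj''1⟩, h⟩
    · have : ((1 : Fin 2), t) ∈ Hb (0 : Fin 2) 0 1 := by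
        rw [← h]; exact mem_gcol.mpr rfl
      rcases mem_Hb.mp this with h' | h' <;> simpa using congrArg Prod.fst h'
    · have : ((0 : Fin 2), t) ∈ Hb (1 : Fin 2) 0 1 := by
        rw [← h]; exact mem_gcol.mpr rfl
      rcases mem_Hb.mp this with h' | h' <;> simpa using congrArg Prod.fst h'
    · rcases htt with rfl | rfl
      · exact hj''0 (gcol_inj h).symm
      · exact hj''1 (gcol_inj h).symm
  exact key _ ht hE

lemma image_Hb (x y : Fin b) (i : Fin 2) :
    (Hb i x y).image σ = {σ (i, x), σ (i, y)} := by
  rw [Hb, Finset.image_insert, Finset.image_singleton]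

lemma refl_M2 (hb : 3 ≤ b) {c : Fin b}
    (hσ : ∀ p : Fin 2 × Fin b, σ p = (1 - p.1, c - p.2))
    (hM : (Mpart (0 : Fin b) 1).image (fun s => s.image σ) = Mpart (0 : Fin b) 1) :
    c = 1 := by
  have h1b : ((1 : Fin b) : ℕ) = 1 := by
    rw [Fin.val_one', Nat.mod_eq_of_lt (by omega)]
  have h10 : (1 : Fin b) ≠ 0 := one_ne_zero_fin (by omega)
  have hE : (Hb (0 : Fin 2) 0 1).image σ ∈ Mpart (0 : Fin b) 1 := by
    rw [← hM]
    exact Finset.mem_image_of_mem _ (mem_Mpart.mpr (Or.inl rfl))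
  rw [image_Hb] at hE
  have e1 : σ ((0 : Fin 2), (0 : Fin b)) = (1, c) := by
    rw [hσ]
    refine Prod.ext ?_ ?_
    · show (1 : Fin 2) - 0 = 1
      decide
    · show c - 0 = c
      exact sub_zero c
  have e2 : σ ((0 : Fin 2), (1 : Fin b)) = (1, c - 1) := by
    rw [hσ]
    refine Prod.ext ?_ ?_
    · show (1 : Fin 2) - 0 = 1
      decide
    · rfl
  rw [e1, e2] at hE
  rcases mem_Mpart.mp hE with h | h | ⟨j'', ⟨hj''0, hj''1⟩, h⟩
  · exfalso
    have : ((1 : Fin 2), c) ∈ Hb (0 : Fin 2) 0 1 := by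
      rw [← h]; exact Finset.mem_insert_self _ _
    rcases mem_Hb.mp this with h' | h' <;> simpa using congrArg Prod.fst h'
  · -- equal to Hb 1 0 1 = {(1,0),(1,1)}
    have hc : ((1 : Fin 2), c) ∈ Hb (1 : Fin 2) 0 1 := by
      rw [← h]; exact Finset.mem_insert_self _ _
    have hc1 : ((1 : Fin 2), c - 1) ∈ Hb (1 : Fin 2) 0 1 := by
      rw [← h]
      exact Finset.mem_insert_of_mem (Finset.mem_singleton_self _)
    rcases mem_Hb.mp hc with h' | h'
    · -- c = 0 : impossible via c - 1
      exfalso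
      have hc0 : c = 0 := congrArg Prod.snd h'
      rcases mem_Hb.mp hc1 with h'' | h''
      · have h3 : c - 1 = 0 := congrArg Prod.snd h''
        rw [hc0, zero_sub, neg_eq_zero] at h3
        exact h10 h3
      · have h3 : c - 1 = 1 := congrArg Prod.snd h''
        rw [hc0, zero_sub] at h3
        have h02 : (0 : Fin b) = 1 + 1 := by
          have h4 := congrArg (fun z : Fin b => z + 1) h3
          simpa using h4
        rw [show (1 : Fin b) + 1 = 2 by open Fin.NatCast in norm_cast] at h02
        have h2v : ((2 : Fin b) : ℕ) = 2 := by
          open Fin.NatCast in have e : (2 : Fin b) = ((2 : ℕ) : Fin b) := by norm_cast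
          rw [e, Fin.val_cast_of_lt (by omega)]
        have hval := congrArg Fin.val h02
        rw [h2v, show ((0 : Fin b) : ℕ) = 0 from rfl] at hval
        omega
    · exact congrArg Prod.snd h'
  · exfalso
    have : ((0 : Fin 2), j'') ∈ ({((1 : Fin 2), c), ((1 : Fin 2), c - 1)} :
        Finset (Fin 2 × Fin b)) := by
      rw [h]; exact mem_gcol.mpr rfl
    rcases Finset.mem_insert.mp this with h' | h'
    · simpa using congrArg Prod.fst h'
    · rw [Finset.mem_singleton] at h'
      simpa using congrArg Prod.fst h'

lemma refl_M3 (hb : 3 ≤ b) {c : Fin b}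
    (hσ : ∀ p : Fin 2 × Fin b, σ p = (1 - p.1, c - p.2)) (hc : c = 1)
    (hM : (Mpart (1 : Fin b) 2).image (fun s => s.image σ) = Mpart (1 : Fin b) 2) :
    False := by
  have h1b : ((1 : Fin b) : ℕ) = 1 := by
    rw [Fin.val_one', Nat.mod_eq_of_lt (by omega)]
  have h2v : ((2 : Fin b) : ℕ) = 2 := by
    open Fin.NatCast in have e : (2 : Fin b) = ((2 : ℕ) : Fin b) := by norm_cast
    rw [e, Fin.val_cast_of_lt (by omega)]
  have hE : (Hb (0 : Fin 2) 1 2).image σ ∈ Mpart (1 : Fin b) 2 := by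
    rw [← hM]
    exact Finset.mem_image_of_mem _ (mem_Mpart.mpr (Or.inl rfl))
  rw [image_Hb] at hE
  have e1 : σ ((0 : Fin 2), (1 : Fin b)) = (1, 0) := by
    rw [hσ, hc]
    refine Prod.ext ?_ ?_
    · show (1 : Fin 2) - 0 = 1
      decide
    · show (1 : Fin b) - 1 = 0
      exact sub_self 1
  have e2 : σ ((0 : Fin 2), (2 : Fin b)) = (1, -1) := by
    rw [hσ, hc]
    refine Prod.ext ?_ ?_
    · show (1 : Fin 2) - 0 = 1
      decide
    · show (1 : Fin b) - 2 = -1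
      rw [← show (1 : Fin b) + 1 = 2 by open Fin.NatCast in norm_cast]
      abel
  rw [e1, e2] at hE
  have hm10 : ((1 : Fin 2), (0 : Fin b)) ∈ ({((1 : Fin 2), (0 : Fin b)),
      ((1 : Fin 2), (-1 : Fin b))} : Finset (Fin 2 × Fin b)) := Finset.mem_insert_self _ _
  rcases mem_Mpart.mp hE with h | h | ⟨j'', ⟨hj''0, hj''1⟩, h⟩
  · rw [h] at hm10
    rcases mem_Hb.mp hm10 with h' | h' <;> simpa using congrArg Prod.fst h'
  · rw [h] at hm10
    rcases mem_Hb.mp hm10 with h' | h'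
    · have := congrArg Fin.val (congrArg Prod.snd h' : (0 : Fin b) = 1)
      rw [Fin.val_zero, h1b] at this
      omega
    · have := congrArg Fin.val (congrArg Prod.snd h' : (0 : Fin b) = 2)
      rw [Fin.val_zero, h2v] at this
      omega
  · have : ((0 : Fin 2), j'') ∈ ({((1 : Fin 2), (0 : Fin b)),
        ((1 : Fin 2), (-1 : Fin b))} : Finset (Fin 2 × Fin b)) := by
      rw [h]; exact mem_gcol.mpr rfl
    rcases Finset.mem_insert.mp this with h' | h'
    · simpa using congrArg Prod.fst h'
    · rw [Finset.mem_singleton] at h'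
      simpa using congrArg Prod.fst h'

/-- Main rigidity result, case `a = 2`. -/
theorem caseA_rigid (hb : 3 ≤ b)
    (hP0 : (Pcols 2 b).image (fun s => s.image σ) = Pcols 2 b)
    (hQ : (Qpart ({0} : Finset (Fin 2)) (b := b)).image (fun s => s.image σ) =
      Qpart ({0} : Finset (Fin 2)) (b := b))
    (hM2 : (Mpart (0 : Fin b) 1).image (fun s => s.image σ) = Mpart (0 : Fin b) 1)
    (hM3 : (Mpart (1 : Fin b) 2).image (fun s => s.image σ) = Mpart (1 : Fin b) 2) :
    σ = 1 := by
  have hb2 : 2 ≤ b := by omega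
  have heps : ∀ j : Fin b, (σ (1, j)).1 = (σ (1, 0)).1 := by
    apply finb_induction
    · rfl
    · intro j hj
      rcases caseA_D hb2 hP0 hQ j with ⟨h1, h2, -⟩ | ⟨h1, h2, -⟩
      · rw [h2]; exact h1.symm.trans hj
      · rw [h2]; exact h1.symm.trans hj
  rcases fin2_cases (σ (1, 0)).1 with he | he
  · -- reflection case
    have hD : ∀ j : Fin b, pimap σ (j + 1) = pimap σ j - 1 := by
      intro j
      rcases caseA_D hb2 hP0 hQ j with ⟨h1, -, -⟩ | ⟨-, -, h3⟩
      · rw [heps j, he] at h1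
        exact absurd h1 (by decide)
      · exact h3
    have hπ : ∀ j : Fin b, pimap σ j = pimap σ 0 - j := refl_of_step hD
    have hσ : ∀ p : Fin 2 × Fin b, σ p = (1 - p.1, pimap σ 0 - p.2) := by
      rintro ⟨i, j⟩
      refine Prod.ext ?_ ?_
      · rcases fin2_cases i with rfl | rfl
        · have hf := flip_fst hP0 j
          rw [heps j, he] at hf
          rcases fin2_cases (σ (0, j)).1 with h' | h'
          · exact absurd h' hf
          · show (σ (0, j)).1 = 1 - (0 : Fin 2)
            rw [h']
            decide
        · show (σ (1, j)).1 = 1 - (1 : Fin 2)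
          rw [heps j, he]
          decide
      · rw [snd_apply hP0, hπ]
    exact absurd (refl_M2 hb hσ hM2) (fun hc => refl_M3 hb hσ hc hM3)
  · -- shift case
    have hD : ∀ j : Fin b, pimap σ (j + 1) = pimap σ j + 1 := by
      intro j
      rcases caseA_D hb2 hP0 hQ j with ⟨-, -, h3⟩ | ⟨h1, -, -⟩
      · exact h3
      · rw [heps j, he] at h1
        exact absurd h1 (by decide)
    have hπ : ∀ j : Fin b, pimap σ j = j + pimap σ 0 := shift_of_step hD
    have hσ : ∀ p : Fin 2 × Fin b, σ p = (p.1, p.2 + pimap σ 0) := by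
      rintro ⟨i, j⟩
      refine Prod.ext ?_ ?_
      · rcases fin2_cases i with rfl | rfl
        · have hf := flip_fst hP0 j
          rw [heps j, he] at hf
          rcases fin2_cases (σ (0, j)).1 with h' | h'
          · exact h'
          · exact absurd h' hf
        · show (σ (1, j)).1 = (1 : Fin 2)
          exact (heps j).trans he
      · rw [snd_apply hP0, hπ]
    have hc := shift_M2 hb hσ hM2
    apply Equiv.ext
    intro p
    rw [hσ, hc, add_zero]
    rfl

end CaseA2


section Tfam
variable {a : ℕ} [NeZero a]

def bitSet (a : ℕ) [NeZero a] (t : ℕ) : Finset (Fin a) :=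
  Finset.univ.filter (fun i => ((i : ℕ)).testBit t)

def Tfam (a : ℕ) [NeZero a] (m t : ℕ) : Finset (Fin a) :=
  if t = m then {0}
  else if 2 * ((bitSet a t).card + 1) = a then bitSet a t else insert 0 (bitSet a t)

lemma mem_bitSet {t : ℕ} {i : Fin a} : i ∈ bitSet a t ↔ ((i : ℕ)).testBit t := by
  rw [bitSet, Finset.mem_filter]
  simp

lemma zero_not_mem_bitSet (t : ℕ) : (0 : Fin a) ∉ bitSet a t := by
  rw [mem_bitSet]
  have : ((0 : Fin a) : ℕ) = 0 := rfl
  rw [this, Nat.zero_testBit]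
  simp

lemma mem_Tfam_of_ne_zero (ha : 3 ≤ a) {m t : ℕ} (htm : t < m) {i : Fin a} (hi : i ≠ 0) :
    (i ∈ Tfam a m t ↔ ((i : ℕ)).testBit t) := by
  rw [Tfam, if_neg (by omega)]
  split
  · exact mem_bitSet
  · rw [Finset.mem_insert, mem_bitSet]
    constructor
    · rintro (h | h)
      · exact absurd h hi
      · exact h
    · exact Or.inr

lemma Tfam_card (ha : 3 ≤ a) {m t : ℕ} (htm : t ≤ m) :
    (Tfam a m t).Nonempty ∧ (Tfam a m t)ᶜ.Nonempty ∧ 2 * (Tfam a m t).card ≠ a := by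
  have h1a : ((1 : Fin a) : ℕ) = 1 := by
    rw [Fin.val_one', Nat.mod_eq_of_lt (by omega)]
  have h2a : ((2 : Fin a) : ℕ) = 2 := by
    open Fin.NatCast in have e : (2 : Fin a) = ((2 : ℕ) : Fin a) := by norm_cast
    rw [e, Fin.val_cast_of_lt (by omega)]
  have h10 : (1 : Fin a) ≠ 0 := one_ne_zero_fin (by omega)
  have h20 : (2 : Fin a) ≠ 0 := by
    intro h
    rw [Fin.ext_iff, h2a, Fin.val_zero] at h
    omega
  rw [Tfam]
  split
  · refine ⟨⟨0, Finset.mem_singleton_self 0⟩, ⟨1, ?_⟩, ?_⟩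
    · rw [Finset.mem_compl, Finset.mem_singleton]
      exact h10
    · rw [Finset.card_singleton]
      omega
  · have hnotall : (1 : Fin a) ∉ bitSet a t ∨ (2 : Fin a) ∉ bitSet a t := by
      by_contra h
      push_neg at h
      have hb1 := mem_bitSet.mp h.1
      have hb2 := mem_bitSet.mp h.2
      rw [h1a] at hb1
      rw [h2a] at hb2
      rw [show (1 : ℕ) = 2 ^ 0 by norm_num, Nat.testBit_two_pow] at hb1
      rw [show (2 : ℕ) = 2 ^ 1 by norm_num, Nat.testBit_two_pow] at hb2
      simp at hb1 hb2
      omega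
    split
    · rename_i hcond
      refine ⟨Finset.card_pos.mp (by omega), ?_, by omega⟩
      rcases hnotall with h | h
      · exact ⟨1, Finset.mem_compl.mpr h⟩
      · exact ⟨2, Finset.mem_compl.mpr h⟩
    · rename_i hcond
      rw [Finset.card_insert_of_notMem (zero_not_mem_bitSet t)]
      refine ⟨⟨0, Finset.mem_insert_self 0 _⟩, ?_, by omega⟩
      rcases hnotall with h | h
      · refine ⟨1, Finset.mem_compl.mpr ?_⟩
        rw [Finset.mem_insert]
        rintro (hh | hh)
        · exact h10 hh
        · exact h hh
      · refine ⟨2, Finset.mem_compl.mpr ?_⟩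
        rw [Finset.mem_insert]
        rintro (hh | hh)
        · exact h20 hh
        · exact h hh

lemma Tfam_sep (ha : 3 ≤ a) {i i' : Fin a} (hne : i ≠ i') :
    ∃ t ≤ Nat.clog 2 a, ¬(i ∈ Tfam a (Nat.clog 2 a) t ↔ i' ∈ Tfam a (Nat.clog 2 a) t) := by
  set m := Nat.clog 2 a with hm
  have hapow : a ≤ 2 ^ m := Nat.le_pow_clog (by norm_num) a
  have hTm : Tfam a m m = {0} := by rw [Tfam, if_pos rfl]
  by_cases hi : i = 0
  · refine ⟨m, le_refl m, ?_⟩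
    rw [hTm, hi, Finset.mem_singleton, Finset.mem_singleton]
    intro hiff
    exact (hi ▸ hne : (0 : Fin a) ≠ i') (hiff.mp rfl).symm
  · by_cases hi' : i' = 0
    · refine ⟨m, le_refl m, ?_⟩
      rw [hTm, hi', Finset.mem_singleton, Finset.mem_singleton]
      intro hiff
      exact hi (hiff.mpr rfl)
    · -- both nonzero, use a differing bit
      have hvne : (i : ℕ) ≠ (i' : ℕ) := fun h => hne (Fin.ext h)
      have hbit : ∃ t, ((i : ℕ)).testBit t ≠ ((i' : ℕ)).testBit t := by
        by_contra h
        push_neg at h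
        exact hvne (Nat.eq_of_testBit_eq h)
      obtain ⟨t, ht⟩ := hbit
      have htm : t < m := by
        by_contra hge
        push_neg at hge
        have l1 : ((i : ℕ)).testBit t = false :=
          Nat.testBit_lt_two_pow (lt_of_lt_of_le i.isLt
            (le_trans hapow (Nat.pow_le_pow_right (by norm_num) hge)))
        have l2 : ((i' : ℕ)).testBit t = false :=
          Nat.testBit_lt_two_pow (lt_of_lt_of_le i'.isLt
            (le_trans hapow (Nat.pow_le_pow_right (by norm_num) hge)))
        rw [l1, l2] at ht
        exact ht rfl
      refine ⟨t, le_of_lt htm, ?_⟩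
      rw [mem_Tfam_of_ne_zero ha htm hi, mem_Tfam_of_ne_zero ha htm hi']
      intro hiff
      rcases Bool.eq_false_or_eq_true (((i : ℕ)).testBit t) with h | h <;>
        rcases Bool.eq_false_or_eq_true (((i' : ℕ)).testBit t) with h' | h' <;>
          simp [h, h'] at hiff ⊢ <;> exact ht (h.trans h'.symm)

end Tfam


section Counting
variable {a b : ℕ} [NeZero a] [NeZero b]

def grow (a : ℕ) (i : Fin (a - 1)) (h : 2 ≤ a) : Fin a := ⟨i.val + 1, by omega⟩

def bcol (b : ℕ) [NeZero b] (c : Bool) : Fin b := if c then 1 else 0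

def Bblock (b : ℕ) [NeZero b] (ha : 2 ≤ a) (x : Fin b) (v : Fin (a - 1) → Bool) :
    Finset (Fin a × Fin b) :=
  insert ((0 : Fin a), x)
    (Finset.univ.image fun i : Fin (a - 1) => (grow a i ha, bcol b (v i)))

def Pw (b : ℕ) [NeZero b] (ha : 2 ≤ a) (w : Fin (a - 1) → Bool) :
    Finset (Finset (Fin a × Fin b)) :=
  insert (Bblock b ha 0 w) (insert (Bblock b ha 1 (fun i => !(w i)))
    ((Finset.univ.filter (fun j : Fin b => j ≠ 0 ∧ j ≠ 1)).image (gcol a)))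

lemma grow_ne_zero {i : Fin (a - 1)} (h : 2 ≤ a) : grow a i h ≠ 0 := by
  intro hh
  have hv : i.val + 1 = 0 := congrArg Fin.val hh
  omega

lemma grow_inj (h : 2 ≤ a) {i i' : Fin (a - 1)} (hh : grow a i h = grow a i' h) : i = i' := by
  have hv : i.val + 1 = i'.val + 1 := congrArg Fin.val hh
  exact Fin.ext (by omega)

lemma bcol_cases (c : Bool) : bcol b c = 0 ∨ bcol b c = 1 := by
  rcases c with _ | _
  · exact Or.inl rfl
  · exact Or.inr rfl

lemma bcol_inj (hb : 2 ≤ b) {c c' : Bool} (h : bcol b c = bcol b c') : c = c' := by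
  rcases c with _ | _ <;> rcases c' with _ | _
  · rfl
  · exact absurd (h.symm : bcol b true = bcol b false) (one_ne_zero_fin hb)
  · exact absurd (h : bcol b true = bcol b false) (one_ne_zero_fin hb)
  · rfl

lemma mem_Bblock {ha : 2 ≤ a} {x : Fin b} {v : Fin (a - 1) → Bool} {p : Fin a × Fin b} :
    p ∈ Bblock b ha x v ↔ p = ((0 : Fin a), x) ∨
      ∃ i, p = (grow a i ha, bcol b (v i)) := by
  rw [Bblock, Finset.mem_insert, Finset.mem_image]
  constructor
  · rintro (h | ⟨i, -, h⟩)
    · exact Or.inl h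
    · exact Or.inr ⟨i, h.symm⟩
  · rintro (h | ⟨i, h⟩)
    · exact Or.inl h
    · exact Or.inr ⟨i, Finset.mem_univ i, h.symm⟩

lemma mem_Pw {ha : 2 ≤ a} {w : Fin (a - 1) → Bool} {s : Finset (Fin a × Fin b)} :
    s ∈ Pw b ha w ↔ s = Bblock b ha 0 w ∨ s = Bblock b ha 1 (fun i => !(w i)) ∨
      ∃ j : Fin b, (j ≠ 0 ∧ j ≠ 1) ∧ s = gcol a j := by
  rw [Pw, Finset.mem_insert, Finset.mem_insert]
  constructor
  · rintro (h | h | h)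
    · exact Or.inl h
    · exact Or.inr (Or.inl h)
    · obtain ⟨j, hj, hj2⟩ := Finset.mem_image.mp h
      rw [Finset.mem_filter] at hj
      exact Or.inr (Or.inr ⟨j, hj.2, hj2.symm⟩)
  · rintro (h | h | ⟨j, hj, rfl⟩)
    · exact Or.inl h
    · exact Or.inr (Or.inl h)
    · exact Or.inr (Or.inr (Finset.mem_image_of_mem _
        (Finset.mem_filter.mpr ⟨Finset.mem_univ j, hj⟩)))

lemma card_Bblock (ha : 2 ≤ a) (x : Fin b) (v : Fin (a - 1) → Bool) :
    (Bblock b ha x v).card = a := by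
  have hinj : Function.Injective
      (fun i : Fin (a - 1) => ((grow a i ha, bcol b (v i)) : Fin a × Fin b)) := by
    intro i i' h
    exact grow_inj ha (congrArg Prod.fst h)
  rw [Bblock, Finset.card_insert_of_notMem, Finset.card_image_of_injective _ hinj]
  · simp only [Finset.card_univ, Fintype.card_fin]
    omega
  · intro hmem'
    obtain ⟨i, -, h⟩ := Finset.mem_image.mp hmem'
    exact grow_ne_zero ha (congrArg Prod.fst h)

lemma snd_mem_Bblock {ha : 2 ≤ a} {x : Fin b} {v : Fin (a - 1) → Bool}
    {p : Fin a × Fin b} (hx : x = 0 ∨ x = 1) (hp : p ∈ Bblock b ha x v) :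
    p.2 = 0 ∨ p.2 = 1 := by
  rcases mem_Bblock.mp hp with rfl | ⟨i, rfl⟩
  · exact hx
  · exact bcol_cases (v i)

lemma Pw_uniform (ha : 2 ≤ a) (hb : 2 ≤ b) (w : Fin (a - 1) → Bool) :
    (∀ s ∈ Pw b ha w, s.card = a) ∧
      ((Pw b ha w : Set (Finset (Fin a × Fin b))).PairwiseDisjoint id) ∧
      ∀ p : Fin a × Fin b, ∃ s ∈ Pw b ha w, p ∈ s := by
  have h10b : (1 : Fin b) ≠ 0 := one_ne_zero_fin hb
  have dBB : Disjoint (Bblock b ha 0 w) (Bblock b ha 1 (fun i => !(w i))) := by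
    rw [Finset.disjoint_left]
    intro p hp hp'
    rcases mem_Bblock.mp hp with rfl | ⟨i, rfl⟩ <;>
      rcases mem_Bblock.mp hp' with h' | ⟨i', h'⟩
    · exact h10b (congrArg Prod.snd h').symm
    · exact grow_ne_zero ha (congrArg Prod.fst h').symm
    · exact grow_ne_zero ha (congrArg Prod.fst h')
    · have hii : i = i' := grow_inj ha (congrArg Prod.fst h')
      have hcc := bcol_inj hb (congrArg Prod.snd h')
      rw [hii] at hcc
      simp at hcc
  have dBcol : ∀ (x : Fin b) (v : Fin (a - 1) → Bool) (j : Fin b), (x = 0 ∨ x = 1) →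
      j ≠ 0 → j ≠ 1 → Disjoint (Bblock b ha x v) (gcol a j) := by
    intro x v j hx hj0 hj1
    rw [Finset.disjoint_left]
    intro p hp hp'
    have := mem_gcol.mp hp'
    rcases snd_mem_Bblock hx hp with h | h
    · exact hj0 (this ▸ h ▸ rfl)
    · exact hj1 (this ▸ h ▸ rfl)
  refine ⟨?_, ?_, ?_⟩
  · intro s hs
    rcases mem_Pw.mp hs with rfl | rfl | ⟨j, -, rfl⟩
    · exact card_Bblock ha 0 w
    · exact card_Bblock ha 1 _
    · exact card_gcol j
  · intro s hs t ht hst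
    simp only [Function.onFun, id]
    rcases mem_Pw.mp (Finset.mem_coe.mp hs) with rfl | rfl | ⟨j, ⟨hj0, hj1⟩, rfl⟩ <;>
      rcases mem_Pw.mp (Finset.mem_coe.mp ht) with rfl | rfl | ⟨j', ⟨hj0', hj1'⟩, rfl⟩
    · exact absurd rfl hst
    · exact dBB
    · exact dBcol _ _ j' (Or.inl rfl) hj0' hj1'
    · exact dBB.symm
    · exact absurd rfl hst
    · exact dBcol _ _ j' (Or.inr rfl) hj0' hj1'
    · exact (dBcol _ _ j (Or.inl rfl) hj0 hj1).symm
    · exact (dBcol _ _ j (Or.inr rfl) hj0 hj1).symm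
    · have hjj : j ≠ j' := fun h => hst (by rw [h])
      rw [Finset.disjoint_left]
      intro p hp hp'
      exact hjj (mem_gcol.mp hp ▸ mem_gcol.mp hp')
  · rintro ⟨i, j⟩
    by_cases hj0 : j = 0
    · by_cases hi : i = 0
      · exact ⟨Bblock b ha 0 w, mem_Pw.mpr (Or.inl rfl),
          mem_Bblock.mpr (Or.inl (by rw [hi, hj0]))⟩
      · -- i = grow k, j ∈ {0,1}: pick the block containing it
        have hiv : (i : ℕ) - 1 < a - 1 := by
          have := i.isLt
          have : (i : ℕ) ≠ 0 := fun h => hi (Fin.ext h)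
          omega
        set k : Fin (a - 1) := ⟨(i : ℕ) - 1, hiv⟩ with hk
        have hgrow : grow a k ha = i := by
          apply Fin.ext
          show (i : ℕ) - 1 + 1 = i
          have : (i : ℕ) ≠ 0 := fun h => hi (Fin.ext h)
          omega
        rcases hwk : w k with _ | _
        · -- w k = false : bcol b (w k) = 0 = j
          refine ⟨Bblock b ha 0 w, mem_Pw.mpr (Or.inl rfl), ?_⟩
          rw [mem_Bblock]
          refine Or.inr ⟨k, ?_⟩
          rw [hgrow, hwk]
          exact Prod.ext rfl (by rw [hj0]; rfl)
        · -- w k = true : !(w k) = false, so (i,0) is in the second block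
          refine ⟨Bblock b ha 1 (fun i => !(w i)), mem_Pw.mpr (Or.inr (Or.inl rfl)), ?_⟩
          rw [mem_Bblock]
          refine Or.inr ⟨k, ?_⟩
          rw [hgrow, hwk]
          exact Prod.ext rfl (by rw [hj0]; rfl)
    · by_cases hj1 : j = 1
      · by_cases hi : i = 0
        · exact ⟨Bblock b ha 1 (fun i => !(w i)), mem_Pw.mpr (Or.inr (Or.inl rfl)),
            mem_Bblock.mpr (Or.inl (by rw [hi, hj1]))⟩
        · have hiv : (i : ℕ) - 1 < a - 1 := by
            have := i.isLt
            have : (i : ℕ) ≠ 0 := fun h => hi (Fin.ext h)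
            omega
          set k : Fin (a - 1) := ⟨(i : ℕ) - 1, hiv⟩ with hk
          have hgrow : grow a k ha = i := by
            apply Fin.ext
            show (i : ℕ) - 1 + 1 = i
            have : (i : ℕ) ≠ 0 := fun h => hi (Fin.ext h)
            omega
          rcases hwk : w k with _ | _
          · refine ⟨Bblock b ha 1 (fun i => !(w i)), mem_Pw.mpr (Or.inr (Or.inl rfl)), ?_⟩
            rw [mem_Bblock]
            refine Or.inr ⟨k, ?_⟩
            rw [hgrow, hwk]
            exact Prod.ext rfl (by rw [hj1]; rfl)
          · refine ⟨Bblock b ha 0 w, mem_Pw.mpr (Or.inl rfl), ?_⟩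
            rw [mem_Bblock]
            refine Or.inr ⟨k, ?_⟩
            rw [hgrow, hwk]
            exact Prod.ext rfl (by rw [hj1]; rfl)
      · exact ⟨gcol a j, mem_Pw.mpr (Or.inr (Or.inr ⟨j, ⟨hj0, hj1⟩, rfl⟩)),
          mem_gcol.mpr rfl⟩

lemma Pw_inj (ha : 2 ≤ a) (hb : 2 ≤ b) : Function.Injective (Pw (a := a) b ha) := by
  have h10b : (1 : Fin b) ≠ 0 := one_ne_zero_fin hb
  intro w w' h
  have hB : Bblock b ha 0 w = Bblock b ha 0 w' := by
    have hmem : Bblock b ha 0 w ∈ Pw b ha w' := by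
      rw [← h]
      exact mem_Pw.mpr (Or.inl rfl)
    rcases mem_Pw.mp hmem with h' | h' | ⟨j, ⟨hj0, hj1⟩, h'⟩
    · exact h'
    · exfalso
      have : ((0 : Fin a), (0 : Fin b)) ∈ Bblock b ha 1 (fun i => !(w' i)) := by
        rw [← h']
        exact mem_Bblock.mpr (Or.inl rfl)
      rcases mem_Bblock.mp this with hh | ⟨i, hh⟩
      · exact h10b (congrArg Prod.snd hh).symm
      · exact grow_ne_zero ha (congrArg Prod.fst hh).symm
    · exfalso
      have : ((0 : Fin a), (0 : Fin b)) ∈ gcol a j := by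
        rw [← h']
        exact mem_Bblock.mpr (Or.inl rfl)
      exact hj0 (mem_gcol.mp this).symm
  funext i
  have hmem : (grow a i ha, bcol b (w i)) ∈ Bblock b ha 0 w' := by
    rw [← hB]
    exact mem_Bblock.mpr (Or.inr ⟨i, rfl⟩)
  rcases mem_Bblock.mp hmem with hh | ⟨i', hh⟩
  · exact absurd (congrArg Prod.fst hh) (grow_ne_zero ha)
  · have hii : i = i' := grow_inj ha (congrArg Prod.fst hh)
    rw [← hii] at hh
    exact bcol_inj hb (congrArg Prod.snd hh)

end Counting


section Transport
variable {a b : ℕ} [NeZero a] [NeZero b]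

def Ft (a b : ℕ) (P : Finset (Finset (Fin a × Fin b))) : Finset (Finset (Fin (a * b))) :=
  P.image (fun s => s.image finProdFinEquiv)

lemma Ft_inj : Function.Injective (Ft a b) :=
  Finset.image_injective (Finset.image_injective finProdFinEquiv.injective)

lemma Ft_uniform {P : Finset (Finset (Fin a × Fin b))}
    (h1 : ∀ s ∈ P, s.card = a)
    (h2 : (P : Set (Finset (Fin a × Fin b))).PairwiseDisjoint id)
    (h3 : ∀ p : Fin a × Fin b, ∃ s ∈ P, p ∈ s) :
    IsUniformPartition a (Ft a b P) := by
  refine ⟨?_, ?_, ?_⟩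
  · intro s hs
    obtain ⟨t, ht, rfl⟩ := Finset.mem_image.mp hs
    rw [Finset.card_image_of_injective _ finProdFinEquiv.injective]
    exact h1 t ht
  · intro s hs t ht hst
    obtain ⟨s₀, hs₀, rfl⟩ := Finset.mem_image.mp (Finset.mem_coe.mp hs)
    obtain ⟨t₀, ht₀, rfl⟩ := Finset.mem_image.mp (Finset.mem_coe.mp ht)
    have h₀ : s₀ ≠ t₀ := fun hh => hst (by rw [hh])
    simp only [Function.onFun, id]
    exact (Finset.disjoint_image finProdFinEquiv.injective).mpr
      (h2 (Finset.mem_coe.mpr hs₀) (Finset.mem_coe.mpr ht₀) h₀)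
  · intro x
    obtain ⟨s, hs, hxs⟩ := h3 (finProdFinEquiv.symm x)
    refine ⟨s.image finProdFinEquiv, Finset.mem_image_of_mem _ hs, ?_⟩
    have := Finset.mem_image_of_mem (finProdFinEquiv : Fin a × Fin b ≃ Fin (a * b)) hxs
    rwa [Equiv.apply_symm_apply] at this

/-- transport of a permutation of `Fin (a*b)` to the grid -/
def gridPerm (a b : ℕ) (σ' : Equiv.Perm (Fin (a * b))) : Equiv.Perm (Fin a × Fin b) :=
  ((finProdFinEquiv : Fin a × Fin b ≃ Fin (a * b)).trans σ').trans finProdFinEquiv.symm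

lemma gridPerm_apply (σ' : Equiv.Perm (Fin (a * b))) (p : Fin a × Fin b) :
    gridPerm a b σ' p = finProdFinEquiv.symm (σ' (finProdFinEquiv p)) := rfl

lemma gimage_comm (σ' : Equiv.Perm (Fin (a * b))) (s : Finset (Fin a × Fin b)) :
    (s.image finProdFinEquiv).image σ' = (s.image (gridPerm a b σ')).image finProdFinEquiv := by
  rw [Finset.image_image, Finset.image_image]
  apply Finset.image_congr
  intro p _
  show σ' (finProdFinEquiv p) = finProdFinEquiv (gridPerm a b σ' p)
  rw [gridPerm_apply, Equiv.apply_symm_apply]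

lemma stab_transport (σ' : Equiv.Perm (Fin (a * b))) (P : Finset (Finset (Fin a × Fin b)))
    (h : (Ft a b P).image (fun s => s.image σ') = Ft a b P) :
    P.image (fun s => s.image (gridPerm a b σ')) = P := by
  apply Ft_inj
  rw [← h, Ft, Ft, Finset.image_image, Finset.image_image]
  apply Finset.image_congr
  intro s _
  show (s.image (gridPerm a b σ')).image finProdFinEquiv = (s.image finProdFinEquiv).image σ'
  rw [gimage_comm]

lemma gridPerm_eq_one (σ' : Equiv.Perm (Fin (a * b))) (h : gridPerm a b σ' = 1) : σ' = 1 := by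
  apply Equiv.ext
  intro x
  have h2 := congrArg (fun f : Equiv.Perm (Fin a × Fin b) => f (finProdFinEquiv.symm x)) h
  simp only [gridPerm_apply, Equiv.apply_symm_apply] at h2
  have : finProdFinEquiv.symm (σ' x) = finProdFinEquiv.symm x := h2
  have := congrArg (finProdFinEquiv : Fin a × Fin b ≃ Fin (a * b)) this
  rwa [Equiv.apply_symm_apply, Equiv.apply_symm_apply] at this

end Transport

section Assembly

lemma perm_smul_double {α : Type*} [DecidableEq α] (g : Equiv.Perm α) (P : Finset (Finset α)) :
    g • P = P.image (fun s => s.image g) := by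
  simp only [Finset.smul_finset_def, Equiv.Perm.smul_def]

lemma mem_uniformPartitions {a b : ℕ} {P : Finset (Finset (Fin (a * b)))} :
    P ∈ uniformPartitions a b ↔ IsUniformPartition a P := Iff.rfl

lemma exists_base (a b : ℕ) (ha : 2 ≤ a) (hb : 2 ≤ b) (hab : ¬(a = 2 ∧ b = 2)) :
    ∃ B : Finset (uniformPartitions a b), B.card ≤ Nat.clog 2 a + 3 ∧
      ∀ g : Equiv.Perm (Fin (a * b)), (∀ ω ∈ B, g • ω = ω) → g = 1 := by
  haveI : NeZero a := ⟨by omega⟩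
  haveI : NeZero b := ⟨by omega⟩
  -- helper to turn fixed subtype elements into grid stabilizer statements
  have bridge : ∀ (g : Equiv.Perm (Fin (a * b))) (P : Finset (Finset (Fin a × Fin b)))
      (hmem : Ft a b P ∈ uniformPartitions a b),
      g • (⟨Ft a b P, hmem⟩ : uniformPartitions a b) = ⟨Ft a b P, hmem⟩ →
        P.image (fun s => s.image (gridPerm a b g)) = P := by
    intro g P hmem hfix
    apply stab_transport
    have hval := congrArg Subtype.val hfix
    rw [SubMulAction.val_smul] at hval
    have hval2 : g • Ft a b P = Ft a b P := hval
    exact (perm_smul_double g (Ft a b P)).symm.trans hval2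
  by_cases ha2 : a = 2
  · -- case a = 2, so b ≥ 3
    subst ha2
    have hb3 : 3 ≤ b := by
      rcases Nat.lt_or_ge b 3 with h | h
      · exact absurd ⟨rfl, by omega⟩ hab
      · exact h
    have h12 : (1 : Fin b) ≠ 2 := by
      intro h
      have hv := congrArg Fin.val h
      rw [Fin.val_one', Nat.mod_eq_of_lt (by omega)] at hv
      have h2v : ((2 : Fin b) : ℕ) = 2 := by
        open Fin.NatCast in have e : (2 : Fin b) = ((2 : ℕ) : Fin b) := by norm_cast
        rw [e, Fin.val_cast_of_lt (by omega)]
      rw [h2v] at hv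
      omega
    have h01 : (0 : Fin b) ≠ 1 := fun h => one_ne_zero_fin (by omega) h.symm
    have u0 := Pcols_uniform (a := 2) (b := b)
    have u1 := Qpart_uniform (b := b) (by omega : 2 ≤ b) ({0} : Finset (Fin 2))
    have u2 := Mpart_uniform h01
    have u3 := Mpart_uniform h12
    refine ⟨{⟨Ft 2 b (Pcols 2 b), Ft_uniform u0.1 u0.2.1 u0.2.2⟩,
             ⟨Ft 2 b (Qpart ({0} : Finset (Fin 2))), Ft_uniform u1.1 u1.2.1 u1.2.2⟩,
             ⟨Ft 2 b (Mpart 0 1), Ft_uniform u2.1 u2.2.1 u2.2.2⟩,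
             ⟨Ft 2 b (Mpart 1 2), Ft_uniform u3.1 u3.2.1 u3.2.2⟩}, ?_, ?_⟩
    · have : Nat.clog 2 2 + 3 = 4 := by
        have h1 : Nat.clog 2 2 ≤ 1 := (Nat.clog_le_iff_le_pow (by norm_num)).mpr (by norm_num)
        have h2 : 0 < Nat.clog 2 2 := Nat.clog_pos (by norm_num) (by norm_num)
        omega
      rw [this]
      apply le_trans (Finset.card_insert_le _ _)
      have := Finset.card_insert_le (⟨Ft 2 b (Qpart ({0} : Finset (Fin 2))),
        Ft_uniform u1.1 u1.2.1 u1.2.2⟩ : uniformPartitions 2 b)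
        ({⟨Ft 2 b (Mpart 0 1), Ft_uniform u2.1 u2.2.1 u2.2.2⟩,
          ⟨Ft 2 b (Mpart 1 2), Ft_uniform u3.1 u3.2.1 u3.2.2⟩} : Finset (uniformPartitions 2 b))
      have h3 := Finset.card_insert_le (⟨Ft 2 b (Mpart 0 1), Ft_uniform u2.1 u2.2.1 u2.2.2⟩ :
        uniformPartitions 2 b)
        ({⟨Ft 2 b (Mpart 1 2), Ft_uniform u3.1 u3.2.1 u3.2.2⟩} : Finset (uniformPartitions 2 b))
      have h4 : ({⟨Ft 2 b (Mpart 1 2), Ft_uniform u3.1 u3.2.1 u3.2.2⟩} :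
        Finset (uniformPartitions 2 b)).card = 1 := Finset.card_singleton _
      omega
    · intro g hg
      have s0 := bridge g (Pcols 2 b) (Ft_uniform u0.1 u0.2.1 u0.2.2) (hg _ (by simp))
      have s1 := bridge g (Qpart ({0} : Finset (Fin 2))) (Ft_uniform u1.1 u1.2.1 u1.2.2)
        (hg _ (by simp))
      have s2 := bridge g (Mpart 0 1) (Ft_uniform u2.1 u2.2.1 u2.2.2) (hg _ (by simp))
      have s3 := bridge g (Mpart 1 2) (Ft_uniform u3.1 u3.2.1 u3.2.2) (hg _ (by simp))
      exact gridPerm_eq_one g (caseA_rigid hb3 s0 s1 s2 s3)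
  · -- case a ≥ 3
    have ha3 : 3 ≤ a := by omega
    set m := Nat.clog 2 a with hm
    have uP := Pcols_uniform (a := a) (b := b)
    have uR := Rpart_uniform (a := a) (b := b) ha hb
    have uQ : ∀ t, (∀ s ∈ Qpart (Tfam a m t) (b := b), s.card = a) ∧
        ((Qpart (Tfam a m t) (b := b) : Set (Finset (Fin a × Fin b))).PairwiseDisjoint id) ∧
        ∀ x : Fin a × Fin b, ∃ s ∈ Qpart (Tfam a m t) (b := b), x ∈ s :=
      fun t => Qpart_uniform hb _
    refine ⟨insert ⟨Ft a b (Pcols a b), Ft_uniform uP.1 uP.2.1 uP.2.2⟩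
        (insert ⟨Ft a b (Rpart a b), Ft_uniform uR.1 uR.2.1 uR.2.2⟩
          ((Finset.range (m + 1)).image (fun t =>
            ⟨Ft a b (Qpart (Tfam a m t) (b := b)),
              Ft_uniform (uQ t).1 (uQ t).2.1 (uQ t).2.2⟩))), ?_, ?_⟩
    · apply le_trans (Finset.card_insert_le _ _)
      have h2 := Finset.card_insert_le (⟨Ft a b (Rpart a b), Ft_uniform uR.1 uR.2.1 uR.2.2⟩ :
        uniformPartitions a b)
        ((Finset.range (m + 1)).image (fun t =>
          (⟨Ft a b (Qpart (Tfam a m t) (b := b)),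
            Ft_uniform (uQ t).1 (uQ t).2.1 (uQ t).2.2⟩ : uniformPartitions a b)))
      have h3 := Finset.card_image_le (s := Finset.range (m + 1))
        (f := fun t => (⟨Ft a b (Qpart (Tfam a m t) (b := b)),
          Ft_uniform (uQ t).1 (uQ t).2.1 (uQ t).2.2⟩ : uniformPartitions a b))
      rw [Finset.card_range] at h3
      omega
    · intro g hg
      have sP := bridge g (Pcols a b) (Ft_uniform uP.1 uP.2.1 uP.2.2)
        (hg _ (Finset.mem_insert_self _ _))
      have sR := bridge g (Rpart a b) (Ft_uniform uR.1 uR.2.1 uR.2.2)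
        (hg _ (Finset.mem_insert_of_mem (Finset.mem_insert_self _ _)))
      have sQ : ∀ t ≤ m, (Qpart (Tfam a m t) (b := b)).image
          (fun s => s.image (gridPerm a b g)) = Qpart (Tfam a m t) (b := b) := by
        intro t ht
        exact bridge g (Qpart (Tfam a m t) (b := b))
          (Ft_uniform (uQ t).1 (uQ t).2.1 (uQ t).2.2) (hg _
          (Finset.mem_insert_of_mem (Finset.mem_insert_of_mem
            (Finset.mem_image_of_mem _ (Finset.mem_range.mpr (by omega))))))
      apply gridPerm_eq_one g
      exact caseB_rigid ha3 hb (Tfam a m) m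
        (fun t ht => (Tfam_card ha3 ht).1)
        (fun t ht => (Tfam_card ha3 ht).2.1)
        (fun t ht => (Tfam_card ha3 ht).2.2)
        (fun i i' hne => Tfam_sep ha3 hne)
        sP sQ sR

end Assembly


section Numerics

lemma two_mul_le_two_pow : ∀ m : ℕ, 1 ≤ m → 2 * m ≤ 2 ^ m := by
  intro m
  induction m with
  | zero => intro h; exact absurd h (by omega)
  | succ n ih =>
    intro h
    rcases Nat.eq_zero_or_pos n with rfl | hn
    · norm_num
    · have := ih hn
      rw [pow_succ]
      omega

lemma clog_bound (a : ℕ) (ha : 2 ≤ a) : 2 * Nat.clog 2 a ≤ a + 5 := by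
  set m := (a + 5) / 2 with hm
  have hm3 : 3 ≤ m := by omega
  have hpow : a ≤ 2 ^ m := by
    have h1 : a ≤ 2 * m - 4 := by omega
    have h2 : 2 * m ≤ 2 ^ m := two_mul_le_two_pow m (by omega)
    omega
  have := (Nat.clog_le_iff_le_pow (by norm_num : 1 < 2)).mpr hpow
  omega

lemma card_lower (a b : ℕ) (ha : 2 ≤ a) (hb : 2 ≤ b) :
    2 ^ (a - 1) ≤ Nat.card (uniformPartitions a b) := by
  haveI : NeZero a := ⟨by omega⟩
  haveI : NeZero b := ⟨by omega⟩
  have hΦinj : Function.Injective (fun w : Fin (a - 1) → Bool =>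
      (⟨Ft a b (Pw b ha w), Ft_uniform (Pw_uniform ha hb w).1 (Pw_uniform ha hb w).2.1
        (Pw_uniform ha hb w).2.2⟩ : uniformPartitions a b)) := by
    intro w w' h
    have := congrArg Subtype.val h
    exact Pw_inj ha hb (Ft_inj this)
  have hcard := Nat.card_le_card_of_injective _ hΦinj
  have heq : Nat.card (Fin (a - 1) → Bool) = 2 ^ (a - 1) := by
    rw [Nat.card_eq_fintype_card, Fintype.card_fun]
    simp
  rw [heq] at hcard
  exact hcard

end Numerics

/-- For integers `a, b ≥ 2` with `(a,b) ≠ (2,2)`, the base size of `Sym(ab)` acting on the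
set `Ω` of partitions of `{1,…,ab}` into `b` blocks of size `a` is at most
`(1/2)·log₂ |Ω| + 6`. -/
theorem baseSize_partitions_le (a b : ℕ) (ha : 2 ≤ a) (hb : 2 ≤ b)
    (hab : ¬(a = 2 ∧ b = 2)) :
    (baseSize (Equiv.Perm (Fin (a * b))) (uniformPartitions a b) : ℝ) ≤
      (1 / 2) * Real.logb 2 (Nat.card (uniformPartitions a b)) + 6 := by
  obtain ⟨B, hcard, htriv⟩ := exists_base a b ha hb hab
  have h1 : baseSize (Equiv.Perm (Fin (a * b))) (uniformPartitions a b) ≤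
      Nat.clog 2 a + 3 := by
    refine le_trans ?_ hcard
    unfold baseSize
    exact Nat.sInf_le ⟨B, rfl, htriv⟩
  set n := Nat.card (uniformPartitions a b) with hn
  have h2 : 2 ^ (a - 1) ≤ n := card_lower a b ha hb
  have h3 : ((a : ℝ) - 1) ≤ Real.logb 2 n := by
    have hpos : (0 : ℝ) < 2 ^ (a - 1) := by positivity
    have hle : ((2 : ℝ)) ^ (a - 1) ≤ (n : ℝ) := by
      have := h2
      exact_mod_cast this
    have := Real.logb_le_logb_of_le (by norm_num : (1 : ℝ) < 2) hpos hle
    rw [Real.logb_pow, Real.logb_self_eq_one (by norm_num)] at this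
    have hc : ((a - 1 : ℕ) : ℝ) = (a : ℝ) - 1 := by
      have : (1 : ℕ) ≤ a := by omega
      push_cast [Nat.cast_sub this]
      ring
    rw [hc] at this
    simpa using this
  have h4 : (baseSize (Equiv.Perm (Fin (a * b))) (uniformPartitions a b) : ℝ) ≤
      (Nat.clog 2 a : ℝ) + 3 := by exact_mod_cast h1
  have h5 : (Nat.clog 2 a : ℝ) ≤ ((a : ℝ) + 5) / 2 := by
    have := clog_bound a ha
    have hcast : (2 : ℝ) * (Nat.clog 2 a : ℝ) ≤ (a : ℝ) + 5 := by exact_mod_cast this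
    linarith
  calc (baseSize (Equiv.Perm (Fin (a * b))) (uniformPartitions a b) : ℝ)
      ≤ (Nat.clog 2 a : ℝ) + 3 := h4
    _ ≤ ((a : ℝ) + 5) / 2 + 3 := by linarith
    _ = ((a : ℝ) - 1) / 2 + 6 := by ring
    _ ≤ Real.logb 2 n / 2 + 6 := by linarith
    _ = (1 / 2) * Real.logb 2 n + 6 := by ring
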